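/- Let W be an integral domain which is a commutative ℂ-algebra, equipped with a ℂ-linear derivation ∂ : W → W, and assume that the field of constants of the fraction field Frac(W) (i.e., the elements of Frac(W) killed by the canonical extension of ∂) equals ℂ. Then the ℂ-linear map W ⊗_ℂ W → ∏_{k∈ℕ} W sending a ⊗ b to the sequence (a·∂^k(b))_{k≥0} is injective. (This is part (a) of the Lemma in Section 12.1 of the paper: elements ∑_i a_i ⊗ b_i of W ⊗ W correspond bijectively to the pseudodifferential operators ∑_i a_i ∂^{-1}∘b_i; the constants hypothesis must be imposed on the fraction field for the statement to hold.) -/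

import Mathlib

open scoped TensorProduct

/-- The `ℂ`-linear map `W ⊗_ℂ W → ∏_{k ∈ ℕ} W` sending `a ⊗ b` to the sequence
`(a · ∂^k(b))_{k ≥ 0}` of coefficients of the pseudodifferential operator `a ∂⁻¹ ∘ b`. -/
noncomputable def pdoPairing {W : Type*} [CommRing W] [Algebra ℂ W]
    (D : Derivation ℂ W W) : W ⊗[ℂ] W →ₗ[ℂ] (ℕ → W) :=
  TensorProduct.lift <| LinearMap.mk₂ ℂ
    (fun a b k => a * (D.toLinearMap ^ k) b)
    (fun a a' b => by funext k; simp [add_mul])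
    (fun s a b => by funext k; simp [smul_mul_assoc])
    (fun a b b' => by funext k; simp [mul_add])
    (fun s a b => by funext k; simp [mul_smul_comm])

/-- Key Wronskian-style lemma: if `b` is a `ℂ`-linearly independent family in `W` and the
coefficients `c` satisfy `∑ⱼ cⱼ · ∂ᵏ(bⱼ) = 0` for all `k`, then all `cⱼ = 0`. -/
lemma pdo_key_lemma {W : Type*} [CommRing W] [IsDomain W] [Algebra ℂ W]
    (D : Derivation ℂ W W)
    (hconst : ∀ a b : W, b ≠ 0 → b * D a = a * D b →
      ∃ c : ℂ, a = algebraMap ℂ W c * b)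
    {ι : Type*} {b : ι → W} (hb : LinearIndependent ℂ b) :
    ∀ (s : Finset ι) (c : ι → W),
      (∀ k : ℕ, ∑ j ∈ s, c j * (D.toLinearMap ^ k) (b j) = 0) →
      ∀ j ∈ s, c j = 0 := by
  classical
  intro s
  induction s using Finset.strongInduction with
  | _ s ih =>
    intro c hc j hj
    by_contra hcj
    have h1 : ∀ k : ℕ, ∑ i ∈ s, D (c i) * (D.toLinearMap ^ k) (b i) = 0 := by
      intro k
      have hD : ∑ i ∈ s, D (c i * (D.toLinearMap ^ k) (b i)) = 0 := by
        rw [← map_sum, hc k, map_zero]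
      have hexp : ∀ i ∈ s, D (c i * (D.toLinearMap ^ k) (b i))
          = D (c i) * (D.toLinearMap ^ k) (b i)
            + c i * (D.toLinearMap ^ (k+1)) (b i) := by
        intro i _
        rw [D.leibniz, smul_eq_mul, smul_eq_mul, pow_succ', Module.End.mul_apply]
        show _ = _ + c i * D.toLinearMap ((D.toLinearMap ^ k) (b i))
        rw [Derivation.coeFn_coe]
        ring
      rw [Finset.sum_congr rfl hexp, Finset.sum_add_distrib, hc (k+1), add_zero] at hD
      exact hD
    set c' : ι → W := fun i => c j * D (c i) - c i * D (c j) with hc'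
    have h2 : ∀ k, ∑ i ∈ s.erase j, c' i * (D.toLinearMap ^ k) (b i) = 0 := by
      intro k
      have hs : ∑ i ∈ s, c' i * (D.toLinearMap ^ k) (b i) = 0 := by
        calc ∑ i ∈ s, c' i * (D.toLinearMap ^ k) (b i)
            = c j * ∑ i ∈ s, D (c i) * (D.toLinearMap ^ k) (b i)
              - D (c j) * ∑ i ∈ s, c i * (D.toLinearMap ^ k) (b i) := by
              rw [Finset.mul_sum, Finset.mul_sum, ← Finset.sum_sub_distrib]
              exact Finset.sum_congr rfl fun i _ => by simp [hc']; ring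
          _ = 0 := by rw [h1 k, hc k]; ring
      have hz : c' j * (D.toLinearMap ^ k) (b j) = 0 := by simp [hc']
      rwa [← Finset.add_sum_erase s _ hj, hz, zero_add] at hs
    have h3 : ∀ i ∈ s, c j * D (c i) = c i * D (c j) := by
      intro i hi
      rcases eq_or_ne i j with rfl | hij
      · rfl
      · have := ih (s.erase j) (Finset.erase_ssubset hj) c' h2 i
          (Finset.mem_erase.mpr ⟨hij, hi⟩)
        exact sub_eq_zero.mp this
    have h4 : ∀ i ∈ s, ∃ γ : ℂ, c i = algebraMap ℂ W γ * c j :=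
      fun i hi => hconst (c i) (c j) hcj (h3 i hi)
    choose γ hγ using h4
    let g : ι → ℂ := fun i => if h : i ∈ s then γ i h else 0
    have h0 : ∑ i ∈ s, c i * b i = 0 := by simpa using hc 0
    have h5 : ∑ i ∈ s, g i • b i = 0 := by
      have hm : c j * ∑ i ∈ s, g i • b i = 0 := by
        rw [Finset.mul_sum, ← h0]
        refine Finset.sum_congr rfl fun i hi => ?_
        rw [hγ i hi, Algebra.smul_def]
        simp only [g, dif_pos hi]
        ring
      exact (mul_eq_zero.mp hm).resolve_left hcj
    have hgj : g j = 0 := linearIndependent_iff'.mp hb s g h5 j hj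
    apply hcj
    rw [hγ j hj]
    have : γ j hj = 0 := by simpa [g, dif_pos hj] using hgj
    rw [this, map_zero, zero_mul]

/-- Part (a) of the Lemma in Section 12.1: for an integral domain `W` which is a commutative
`ℂ`-algebra with a `ℂ`-linear derivation `∂` such that the constants of `Frac(W)` are exactly
`ℂ`, the map `W ⊗_ℂ W → ∏_{k ∈ ℕ} W`, `a ⊗ b ↦ (a · ∂^k(b))_{k ≥ 0}`, is injective.
The hypothesis that the constants of the fraction field equal `ℂ` is expressed elementwise:
`∂(a/b) = 0` (i.e. `b·∂a = a·∂b` with `b ≠ 0`) implies `a/b ∈ ℂ` (i.e. `a = c·b`). -/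
theorem pdoPairing_injective {W : Type*} [CommRing W] [IsDomain W] [Algebra ℂ W]
    (D : Derivation ℂ W W)
    (hconst : ∀ a b : W, b ≠ 0 → b * D a = a * D b →
      ∃ c : ℂ, a = algebraMap ℂ W c * b) :
    Function.Injective ⇑(pdoPairing D) := by
  classical
  refine (injective_iff_map_eq_zero _).mpr fun x hx => ?_
  set b := Module.Basis.ofVectorSpace ℂ W with hbdef
  set r := ((b.tensorProduct b).repr x) with hrdef
  set t : Finset _ := r.support.image Prod.snd with htdef
  set c : _ → W := fun j => ∑ p ∈ r.support.filter (fun p => p.2 = j), r p • b p.1 with hcdef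
  have hxrep : x = ∑ j ∈ t, c j ⊗ₜ[ℂ] b j := by
    have h1 : x = ∑ p ∈ r.support, r p • (b p.1 ⊗ₜ[ℂ] b p.2) := by
      conv_lhs => rw [← (b.tensorProduct b).linearCombination_repr x]
      rw [Finsupp.linearCombination_apply, Finsupp.sum]
      exact Finset.sum_congr rfl fun p _ => by rw [Module.Basis.tensorProduct_apply']
    rw [h1, ← Finset.sum_fiberwise_of_maps_to (fun p hp => Finset.mem_image_of_mem Prod.snd hp)]
    refine Finset.sum_congr rfl fun j hj => ?_
    rw [hcdef, TensorProduct.sum_tmul]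
    refine Finset.sum_congr rfl fun p hp => ?_
    rw [TensorProduct.smul_tmul', (Finset.mem_filter.mp hp).2]
  have hrel : ∀ k : ℕ, ∑ j ∈ t, c j * (D.toLinearMap ^ k) (b j) = 0 := by
    intro k
    have h2 := congrFun hx k
    rw [hxrep, map_sum] at h2
    simpa [pdoPairing, Finset.sum_apply] using h2
  have hcz := pdo_key_lemma D hconst b.linearIndependent t c hrel
  rw [hxrep]
  exact Finset.sum_eq_zero fun j hj => by rw [hcz j hj, TensorProduct.zero_tmul]
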